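/- Let ρ and σ be n×n positive semidefinite complex matrices. Then the real part of Tr((ρ−σ)·(ρ−σ)·(ρ+σ)) is at least Σ_{i=1}^n |μ_i|³, where μ_1,…,μ_n are the eigenvalues of the Hermitian matrix ρ − σ. -/

import Mathlib

open ComplexOrder

lemma psd_diag_nonneg {n : ℕ} {M : Matrix (Fin n) (Fin n) ℂ} (hM : M.PosSemidef) (i : Fin n) :
    0 ≤ (M i i).re ∧ (M i i).im = 0 := by
  have h := hM.dotProduct_mulVec_nonneg (Pi.single i 1)
  simp [dotProduct, Matrix.mulVec, Pi.single_apply, Finset.sum_ite_eq] at h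
  rw [Complex.le_def] at h
  simp at h
  exact ⟨h.1, h.2.symm⟩

/-- For positive semidefinite `ρ, σ`, the quantity `Re Tr((ρ-σ)²(ρ+σ))` is at least
the cube of the Schatten 3-norm of `ρ - σ`. -/
theorem stmt_10 (n : ℕ) (ρ σ : Matrix (Fin n) (Fin n) ℂ)
    (hρ : ρ.PosSemidef) (hσ : σ.PosSemidef) :
    ∑ i, |(hρ.isHermitian.sub hσ.isHermitian).eigenvalues i| ^ 3 ≤
      (((ρ - σ) * (ρ - σ) * (ρ + σ)).trace).re := by
  set hΔ := hρ.isHermitian.sub hσ.isHermitian with hΔdef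
  set μ := hΔ.eigenvalues with hμdef
  set U : Matrix (Fin n) (Fin n) ℂ := (hΔ.eigenvectorUnitary : Matrix (Fin n) (Fin n) ℂ) with hU
  have hUU : star U * U = 1 := Unitary.coe_star_mul_self hΔ.eigenvectorUnitary
  have hUU' : U * star U = 1 := Unitary.coe_mul_star_self hΔ.eigenvectorUnitary
  set D : Matrix (Fin n) (Fin n) ℂ :=
    Matrix.diagonal (RCLike.ofReal ∘ μ) with hD
  have hspec : (ρ - σ) = U * D * star U := hΔ.spectral_theorem
  have hdiagΔ : star U * (ρ - σ) * U = D := by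
    have h := hΔ.conjStarAlgAut_star_eigenvectorUnitary
    simp at h
    exact h
  have conj_mul : ∀ A B : Matrix (Fin n) (Fin n) ℂ,
      (star U * A * U) * (star U * B * U) = star U * (A * B) * U := by
    intro A B
    simp only [Matrix.mul_assoc]
    rw [← Matrix.mul_assoc U (star U), hUU', Matrix.one_mul]
  have e : D * D * (star U * (ρ + σ) * U)
      = star U * ((ρ - σ) * (ρ - σ) * (ρ + σ)) * U := by
    rw [← hdiagΔ, conj_mul, conj_mul]
  have htr : ((ρ - σ) * (ρ - σ) * (ρ + σ)).trace
      = (D * D * (star U * (ρ + σ) * U)).trace := by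
    rw [e]
    conv_rhs => rw [Matrix.trace_mul_cycle, hUU', Matrix.one_mul]
  rw [htr]
  -- PSD conjugates
  have hρ' : (star U * ρ * U).PosSemidef := by
    simpa [Matrix.star_eq_conjTranspose] using hρ.conjTranspose_mul_mul_same U
  have hσ' : (star U * σ * U).PosSemidef := by
    simpa [Matrix.star_eq_conjTranspose] using hσ.conjTranspose_mul_mul_same U
  -- diagonal entries
  have hsum : star U * (ρ + σ) * U = star U * ρ * U + star U * σ * U := by
    rw [Matrix.mul_add, Matrix.add_mul]
  have hsub : star U * ρ * U - star U * σ * U = D := by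
    rw [← hdiagΔ, Matrix.mul_sub, Matrix.sub_mul]
  -- compute the trace as a sum
  have htrace : (D * D * (star U * (ρ + σ) * U)).trace
      = ∑ i, ((μ i : ℂ) * (μ i : ℂ)) * (star U * (ρ + σ) * U) i i := by
    rw [hD, Matrix.diagonal_mul_diagonal]
    rw [Matrix.trace]
    congr 1
    ext i
    simp [Matrix.diag, Matrix.diagonal_mul]
  rw [htrace]
  rw [Complex.re_sum]
  apply Finset.sum_le_sum
  intro i _
  have ha := psd_diag_nonneg hρ' i
  have hb := psd_diag_nonneg hσ' i
  set a := ((star U * ρ * U) i i).re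
  set b := ((star U * σ * U) i i).re
  have hab : a - b = μ i := by
    have := congrArg (fun M => (M i i).re) hsub
    simpa [hD, Matrix.diagonal_apply_eq] using this
  have hsumre : ((star U * (ρ + σ) * U) i i).re = a + b := by
    rw [hsum]; simp [Matrix.add_apply]; rfl
  have hre : (((μ i : ℂ) * (μ i : ℂ)) * (star U * (ρ + σ) * U) i i).re
      = μ i * μ i * ((star U * (ρ + σ) * U) i i).re := by
    have : ((μ i : ℂ) * (μ i : ℂ)) = ((μ i * μ i : ℝ) : ℂ) := by push_cast; ring
    rw [this]; simp [Complex.mul_re]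
  rw [hre, hsumre]
  have h1 : |μ i| ^ 3 = μ i * μ i * |μ i| := by
    rcases abs_cases (μ i) with ⟨h, _⟩ | ⟨h, _⟩ <;> rw [h] <;> ring
  rw [h1]
  have h2 : |μ i| ≤ a + b := by
    rw [← hab]
    calc |a - b| ≤ |a| + |b| := abs_sub _ _
    _ = a + b := by rw [abs_of_nonneg ha.1, abs_of_nonneg hb.1]
  exact mul_le_mul_of_nonneg_left h2 (mul_self_nonneg _)
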